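/- Let (N,v) be a simple monotone game with n = |N|, let η ∈ N be a null player and let S ⊆ N\{η} with s = |S| ≥ 2. Then the Shapley-Owen coopetition index satisfies |C_SO(S∪{η})| ≤ (1 − 2/(s·(s+1)))·|C_SO(S)|. -/

import Mathlib

open Finset

variable {α : Type*} [DecidableEq α]

/-- A simple monotone game on the player set `N`: `v` maps coalitions to `{0,1}`,
`v ∅ = 0`, `v N = 1`, and `v` is monotone on subsets of `N`. -/
structure SimpleGame (N : Finset α) (v : Finset α → ℝ) : Prop where
  empty : v ∅ = 0
  full : v N = 1
  mono : ∀ ⦃S T : Finset α⦄, S ⊆ T → T ⊆ N → v S ≤ v T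
  binary : ∀ S ⊆ N, v S = 0 ∨ v S = 1

/-- Block interaction indicator `BI v {S₁,S₂} T = v(S₁∪S₂∪T) − v(S₁∪T) − v(S₂∪T) + v(T)`. -/
noncomputable def BI (v : Finset α → ℝ) (π : Sym2 (Finset α)) (T : Finset α) : ℝ :=
  Sym2.lift ⟨fun A B => v (A ∪ B ∪ T) - v (A ∪ T) - v (B ∪ T) + v T,
    fun A B => by simp only []; rw [Finset.union_comm A B]; ring⟩ π

/-- `Π₂(S)`: the set of unordered partitions of `S` into two nonempty parts. -/
def Pi2 (S : Finset α) : Finset (Sym2 (Finset α)) :=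
  (S.powerset.filter fun Q => Q ≠ ∅ ∧ Q ≠ S).image fun Q => s(Q, S \ Q)

/-- `S` is critical with respect to `T`: `v(S∪T) − v(T) = 1`. -/
def Critical (v : Finset α → ℝ) (S T : Finset α) : Prop := v (S ∪ T) - v T = 1

/-- `S` is essential critical with respect to `T`: `S` is critical wrt `T` and no
proper nonempty subset of `S` is critical wrt `T`. -/
def EssentialCritical (v : Finset α → ℝ) (S T : Finset α) : Prop :=
  Critical v S T ∧ ∀ S' : Finset α, S' ⊂ S → S'.Nonempty → ¬ Critical v S' T

/-- The attitude `A_p(S,T)` of `S` towards `T` under the distribution `p` on `Π₂(S)`. -/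
noncomputable def attitude (v : Finset α → ℝ) (p : Sym2 (Finset α) → ℝ)
    (S T : Finset α) : ℝ :=
  ∑ π ∈ Pi2 S, p π * BI v π T

/-- The coopetition index `C_{p,q}(S)`. -/
noncomputable def coop (N : Finset α) (v : Finset α → ℝ)
    (p : Sym2 (Finset α) → ℝ) (q : Finset α → ℝ) (S : Finset α) : ℝ :=
  ∑ T ∈ (N \ S).powerset, q T * attitude v p S T

/-- `Σ_S(N)`: orderings of `N` (as lists) in which the elements of `S` occupy
consecutive positions. -/
noncomputable def SigmaOrd (N S : Finset α) : Finset (List α) := by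
  classical
  exact N.toList.permutations.toFinset.filter
    fun l => ∃ k ∈ Finset.range (l.length + 1), ((l.drop k).take S.card).toFinset = S

/-- Sequential attitude `AS(S,σ)` of `S` towards the ordering `l`:
the average over `k = 1, …, s−1` of the block interaction between the first `k` and the
last `s−k` elements of the block of `S` in `l`, against the predecessors of `S` in `l`. -/
noncomputable def seqAttitude (v : Finset α → ℝ) (S : Finset α) (l : List α) : ℝ :=
  (1 / ((S.card : ℝ) - 1)) * ∑ k ∈ Finset.Icc 1 (S.card - 1),
    BI v (s((((l.dropWhile fun x => decide (x ∉ S)).take S.card).take k).toFinset,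
            (((l.dropWhile fun x => decide (x ∉ S)).take S.card).drop k).toFinset))
      (l.takeWhile fun x => decide (x ∉ S)).toFinset

/-- Shapley-Owen coopetition index defined through orderings. -/
noncomputable def C_SO_ord (N : Finset α) (v : Finset α → ℝ) (S : Finset α) : ℝ :=
  (1 / ((SigmaOrd N S).card : ℝ)) * ∑ l ∈ SigmaOrd N S, seqAttitude v S l

/-- Shapley-Owen weight on partitions `{Q, S\Q}`: `2·q!·(s−q)!/((s−1)·s!)`. -/
noncomputable def soWeight (S : Finset α) : Sym2 (Finset α) → ℝ :=
  Sym2.lift ⟨fun A B => (2 * A.card.factorial * B.card.factorial : ℝ) /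
      (((S.card : ℝ) - 1) * (S.card.factorial : ℝ)),
    fun A B => by simp only []; ring⟩

/-- Shapley-Owen weight on external coalitions: `t!·(n−s−t)!/(n−s+1)!`. -/
noncomputable def soExt (N S T : Finset α) : ℝ :=
  (T.card.factorial * (N.card - S.card - T.card).factorial : ℝ) /
    ((N.card - S.card + 1).factorial : ℝ)

/-- Shapley-Owen coopetition index (closed formula). -/
noncomputable def C_SO (N : Finset α) (v : Finset α → ℝ) (S : Finset α) : ℝ :=
  ∑ T ∈ (N \ S).powerset, soExt N S T * ∑ π ∈ Pi2 S, soWeight S π * BI v π T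

/-- Banzhaf coopetition index. -/
noncomputable def C_Bz (N : Finset α) (v : Finset α → ℝ) (S : Finset α) : ℝ :=
  (1 / ((2 : ℝ) ^ (N.card - S.card) * ((2 : ℝ) ^ (S.card - 1) - 1))) *
    ∑ T ∈ (N \ S).powerset, ∑ π ∈ Pi2 S, BI v π T

/-- Decisiveness index `D_{p,q}(S)`. -/
noncomputable def decis (N : Finset α) (v : Finset α → ℝ)
    (p : Sym2 (Finset α) → ℝ) (q : Finset α → ℝ) (S : Finset α) : ℝ :=
  ∑ T ∈ (N \ S).powerset, q T * ∑ π ∈ Pi2 S, p π * |BI v π T|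

/-- Banzhaf decisiveness index. -/
noncomputable def D_Bz (N : Finset α) (v : Finset α → ℝ) (S : Finset α) : ℝ :=
  (1 / ((2 : ℝ) ^ (N.card - S.card) * ((2 : ℝ) ^ (S.card - 1) - 1))) *
    ∑ T ∈ (N \ S).powerset, ∑ π ∈ Pi2 S, |BI v π T|

/-- Shapley-Owen decisiveness index. -/
noncomputable def D_SO (N : Finset α) (v : Finset α → ℝ) (S : Finset α) : ℝ :=
  ∑ T ∈ (N \ S).powerset, soExt N S T * ∑ π ∈ Pi2 S, soWeight S π * |BI v π T|

/-- The apex game on `N` with apex player `a`. -/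
noncomputable def apexGame (N : Finset α) (a : α) : Finset α → ℝ :=
  fun S => if (a ∈ S ∧ (S \ {a}).Nonempty) ∨ S = N \ {a} then 1 else 0

/-! ### Auxiliary lemmas for Statement 9 -/

lemma union_singleton' (a : α) (s : Finset α) : s ∪ {a} = insert a s := by
  rw [Finset.union_comm, ← Finset.insert_eq]

lemma BI_mk (v : Finset α → ℝ) (A B T : Finset α) :
    BI v s(A, B) T = v (A ∪ B ∪ T) - v (A ∪ T) - v (B ∪ T) + v T := rfl

lemma soWeight_mk (S A B : Finset α) :
    soWeight S s(A, B) = (2 * A.card.factorial * B.card.factorial : ℝ) /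
      (((S.card : ℝ) - 1) * (S.card.factorial : ℝ)) := rfl

/-- Sum over unordered 2-partitions as half the sum over ordered ones. -/
lemma pi2_sum (S : Finset α) (f : Sym2 (Finset α) → ℝ) :
    ∑ π ∈ Pi2 S, f π =
      ∑ Q ∈ S.powerset.filter fun Q => Q ≠ ∅ ∧ Q ≠ S, (1 / 2) * f (s(Q, S \ Q)) := by
  rw [Pi2]
  refine Finset.sum_image' _ fun c hc => ?_
  simp only [Finset.mem_filter, Finset.mem_powerset] at hc
  obtain ⟨hcS, hc0, hcS'⟩ := hc
  have hdc : S \ (S \ c) = c := Finset.sdiff_sdiff_eq_self hcS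
  have hne : c ≠ S \ c := by
    intro h
    obtain ⟨a, ha⟩ := Finset.nonempty_iff_ne_empty.2 hc0
    exact (Finset.mem_sdiff.1 (h ▸ ha)).2 ha
  have hfib : (((S.powerset.filter fun Q => Q ≠ ∅ ∧ Q ≠ S)).filter
      fun Q => s(Q, S \ Q) = s(c, S \ c)) = {c, S \ c} := by
    ext x
    simp only [Finset.mem_filter, Finset.mem_powerset, Finset.mem_insert, Finset.mem_singleton]
    constructor
    · rintro ⟨-, heq⟩
      rcases Sym2.eq_iff.1 heq with ⟨h1, -⟩ | ⟨h1, -⟩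
      · exact Or.inl h1
      · exact Or.inr h1
    · rintro (rfl | rfl)
      · exact ⟨⟨hcS, hc0, hcS'⟩, rfl⟩
      · refine ⟨⟨Finset.sdiff_subset, ?_, ?_⟩, ?_⟩
        · intro h
          exact hcS' (Finset.Subset.antisymm hcS (Finset.sdiff_eq_empty_iff_subset.1 h))
        · intro h
          obtain ⟨a, ha⟩ := Finset.nonempty_iff_ne_empty.2 hc0
          exact (Finset.mem_sdiff.1 (h ▸ hcS ha)).2 ha
        · rw [hdc, Sym2.eq_swap]
  rw [hfib, Finset.sum_pair hne, hdc, Sym2.eq_swap]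
  ring

/-- The inner sum of the Shapley-Owen index, as a sum over subsets. -/
noncomputable def wgt (S Q : Finset α) : ℝ :=
  (Q.card.factorial * (S \ Q).card.factorial : ℝ) /
    (((S.card : ℝ) - 1) * (S.card.factorial : ℝ))

noncomputable def innerP (v : Finset α → ℝ) (S T : Finset α) : ℝ :=
  ∑ Q ∈ S.powerset.filter fun Q => Q ≠ ∅ ∧ Q ≠ S,
    wgt S Q * (v (S ∪ T) - v (Q ∪ T) - v ((S \ Q) ∪ T) + v T)

lemma inner_eq (v : Finset α → ℝ) (S T : Finset α) :
    ∑ π ∈ Pi2 S, soWeight S π * BI v π T = innerP v S T := by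
  rw [pi2_sum S fun π => soWeight S π * BI v π T, innerP]
  refine Finset.sum_congr rfl fun Q hQ => ?_
  simp only [Finset.mem_filter, Finset.mem_powerset] at hQ
  rw [soWeight_mk, BI_mk, Finset.union_sdiff_of_subset hQ.1, wgt]
  ring
set_option maxHeartbeats 1000000 in
/-- Key scalar identity for the weights. -/
lemma scalar_key (a b : ℕ) (ha : 1 ≤ a) (hb : 1 ≤ b) :
    ((a.factorial : ℝ) * ((b + 1).factorial : ℝ)) /
        ((((a + b : ℕ) : ℝ) + 1 - 1) * (((a + b) + 1).factorial : ℝ))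
      + (((a + 1).factorial : ℝ) * (b.factorial : ℝ)) /
        ((((a + b : ℕ) : ℝ) + 1 - 1) * (((a + b) + 1).factorial : ℝ))
    = (1 - 2 / (((a + b : ℕ) : ℝ) * (((a + b : ℕ) : ℝ) + 1))) *
        ((a.factorial : ℝ) * (b.factorial : ℝ) /
          ((((a + b : ℕ) : ℝ) - 1) * (((a + b).factorial : ℝ)))) := by
  have ha' : (1 : ℝ) ≤ (a : ℝ) := by exact_mod_cast ha
  have hb' : (1 : ℝ) ≤ (b : ℝ) := by exact_mod_cast hb
  have h1 : ((a : ℝ) + b) ≠ 0 := by linarith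
  have h2 : ((a : ℝ) + b + 1) ≠ 0 := by linarith
  have h3 : ((a : ℝ) + b - 1) ≠ 0 := by linarith
  have h4 : (((a + b).factorial : ℝ)) ≠ 0 :=
    Nat.cast_ne_zero.2 (Nat.factorial_ne_zero _)
  have h5 : ((a.factorial : ℝ)) ≠ 0 := Nat.cast_ne_zero.2 (Nat.factorial_ne_zero _)
  have h6 : ((b.factorial : ℝ)) ≠ 0 := Nat.cast_ne_zero.2 (Nat.factorial_ne_zero _)
  rw [Nat.factorial_succ (a + b), Nat.factorial_succ a, Nat.factorial_succ b]
  push_cast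
  rw [add_sub_cancel_right]
  field_simp
  ring
set_option maxHeartbeats 1000000 in
/-- The external weights of `S` for `T` and `T ∪ {η}` combine to the weight of `S ∪ {η}`. -/
lemma soExt_key (N S T : Finset α) (η : α) (hη : η ∈ N) (hS : S ⊆ N \ {η})
    (hT : T ⊆ N \ (S ∪ {η})) :
    soExt N S T + soExt N S (insert η T) = soExt N (S ∪ {η}) T := by
  have hηS : η ∉ S := fun h => (Finset.mem_sdiff.1 (hS h)).2 (Finset.mem_singleton_self η)
  have hηT : η ∉ T := fun h => (Finset.mem_sdiff.1 (hT h)).2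
    (Finset.mem_union_right _ (Finset.mem_singleton_self η))
  have hS'N : S ∪ {η} ⊆ N := by
    refine Finset.union_subset (hS.trans Finset.sdiff_subset) ?_
    simpa using hη
  have hcS' : (S ∪ {η}).card = S.card + 1 := by
    rw [union_singleton', Finset.card_insert_of_notMem hηS]
  have hcT : (insert η T).card = T.card + 1 := Finset.card_insert_of_notMem hηT
  have hcards : S.card + 1 + T.card ≤ N.card := by
    have h1 := Finset.card_le_card hT
    have h2 : (N \ (S ∪ {η})).card = N.card - (S.card + 1) := by
      rw [Finset.card_sdiff_of_subset hS'N, hcS']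
    have h3 := Finset.card_le_card hS'N
    rw [hcS'] at h3
    omega
  rw [soExt, soExt, soExt, hcS', hcT]
  obtain ⟨a, ha⟩ : ∃ a, N.card - S.card - T.card = a + 1 :=
    ⟨N.card - S.card - T.card - 1, by omega⟩
  have h1 : N.card - S.card - (T.card + 1) = a := by omega
  have h2 : N.card - (S.card + 1) - T.card = a := by omega
  have h3 : N.card - (S.card + 1) + 1 = a + T.card + 1 := by omega
  have h4 : N.card - S.card + 1 = a + T.card + 2 := by omega
  rw [ha, h1, h2, h3, h4]
  have e2 : (a + T.card + 2).factorial = (a + T.card + 2) * (a + T.card + 1).factorial := rfl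
  rw [e2, Nat.factorial_succ a, Nat.factorial_succ T.card]
  have e3 : (a + T.card + 1).factorial = (a + T.card + 1) * (a + T.card).factorial := rfl
  rw [e3]
  have f3 : ((a + T.card).factorial : ℝ) ≠ 0 := Nat.cast_ne_zero.2 (Nat.factorial_ne_zero _)
  push_cast
  have g1 : ((a : ℝ) + T.card + 2) ≠ 0 := by positivity
  have g3 : ((a : ℝ) + T.card + 1) ≠ 0 := by positivity
  field_simp
  ring
lemma innerP_insert (N : Finset α) (v : Finset α → ℝ) (η : α)
    (hnu : ∀ U ⊆ N \ {η}, v (U ∪ {η}) = v U)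
    (S : Finset α) (hS : S ⊆ N \ {η}) (T : Finset α) (hT : T ⊆ N \ (S ∪ {η})) :
    innerP v S (insert η T) = innerP v S T := by
  have hTN : T ⊆ N \ {η} := hT.trans
    (Finset.sdiff_subset_sdiff (Finset.Subset.refl N) Finset.subset_union_right)
  have key : ∀ X : Finset α, X ⊆ S → v (X ∪ insert η T) = v (X ∪ T) := by
    intro X hX
    have h1 : X ∪ insert η T = (X ∪ T) ∪ {η} := by
      rw [Finset.union_insert, union_singleton']
    rw [h1, hnu _ (Finset.union_subset (hX.trans hS) hTN)]
  have hTη : v (insert η T) = v T := by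
    rw [← union_singleton', hnu _ hTN]
  rw [innerP, innerP]
  refine Finset.sum_congr rfl fun Q hQ => ?_
  simp only [Finset.mem_filter, Finset.mem_powerset] at hQ
  rw [key S (Finset.Subset.refl S), key Q hQ.1, key (S \ Q) Finset.sdiff_subset, hTη]
set_option maxHeartbeats 2000000 in
lemma key_inner (N : Finset α) (v : Finset α → ℝ) (η : α)
    (hnu : ∀ U ⊆ N \ {η}, v (U ∪ {η}) = v U)
    (S : Finset α) (hS : S ⊆ N \ {η}) (hs : 2 ≤ S.card)
    (T : Finset α) (hT : T ⊆ N \ (S ∪ {η})) :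
    innerP v (S ∪ {η}) T =
      (1 - 2 / ((S.card : ℝ) * ((S.card : ℝ) + 1))) * innerP v S T := by
  have hηS : η ∉ S := fun h => (Finset.mem_sdiff.1 (hS h)).2 (Finset.mem_singleton_self η)
  have hTN : T ⊆ N \ {η} := hT.trans
    (Finset.sdiff_subset_sdiff (Finset.Subset.refl N) Finset.subset_union_right)
  have hXT : ∀ X : Finset α, X ⊆ S → v (X ∪ {η} ∪ T) = v (X ∪ T) := by
    intro X hX
    rw [Finset.union_right_comm, hnu _ (Finset.union_subset (hX.trans hS) hTN)]
  have hST : v (S ∪ {η} ∪ T) = v (S ∪ T) := hXT S (Finset.Subset.refl S)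
  have hTη : v ({η} ∪ T) = v T := by
    rw [Finset.union_comm, hnu _ hTN]
  have hSne : S ≠ ∅ := by
    intro h; rw [h] at hs; simp at hs
  have hcard : (S ∪ {η}).card = S.card + 1 := by
    rw [union_singleton', Finset.card_insert_of_notMem hηS]
  -- the pointwise identity on the common index set
  have hpoint : ∀ Q ∈ S.powerset.filter fun Q => Q ≠ ∅ ∧ Q ≠ S,
      (wgt (S ∪ {η}) (insert η Q) *
          (v (S ∪ {η} ∪ T) - v (insert η Q ∪ T) - v ((S ∪ {η}) \ insert η Q ∪ T) + v T)
        + wgt (S ∪ {η}) Q *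
          (v (S ∪ {η} ∪ T) - v (Q ∪ T) - v ((S ∪ {η}) \ Q ∪ T) + v T))
      = (1 - 2 / ((S.card : ℝ) * ((S.card : ℝ) + 1))) *
          (wgt S Q * (v (S ∪ T) - v (Q ∪ T) - v ((S \ Q) ∪ T) + v T)) := by
    intro Q hQ
    simp only [Finset.mem_filter, Finset.mem_powerset] at hQ
    obtain ⟨hQS, hQ0, hQne⟩ := hQ
    have hηQ : η ∉ Q := fun h => hηS (hQS h)
    have h1 : (S ∪ {η}) \ insert η Q = S \ Q := by
      ext a
      simp only [Finset.mem_sdiff, Finset.mem_union, Finset.mem_insert, Finset.mem_singleton]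
      constructor
      · rintro ⟨h | h, hn⟩
        · exact ⟨h, fun hq => hn (Or.inr hq)⟩
        · exact absurd (Or.inl h) hn
      · rintro ⟨ha, hq⟩
        exact ⟨Or.inl ha, fun h => h.elim (fun he => hηS (he ▸ ha)) hq⟩
    have h2 : (S ∪ {η}) \ Q = (S \ Q) ∪ {η} := by
      ext a
      simp only [Finset.mem_sdiff, Finset.mem_union, Finset.mem_singleton]
      constructor
      · rintro ⟨h | h, hn⟩
        · exact Or.inl ⟨h, hn⟩
        · exact Or.inr h
      · rintro (⟨ha, hq⟩ | rfl)
        · exact ⟨Or.inl ha, hq⟩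
        · exact ⟨Or.inr rfl, hηQ⟩
    have h3 : v (insert η Q ∪ T) = v (Q ∪ T) := by
      rw [← union_singleton' η Q]; exact hXT Q hQS
    have h4 : v ((S \ Q) ∪ {η} ∪ T) = v ((S \ Q) ∪ T) := hXT _ Finset.sdiff_subset
    have hb1 : 1 ≤ (S \ Q).card := Finset.card_pos.2
      (Finset.sdiff_nonempty.2 fun h => hQne (Finset.Subset.antisymm hQS h))
    have ha1 : 1 ≤ Q.card := Finset.card_pos.2 (Finset.nonempty_iff_ne_empty.2 hQ0)
    have hab : Q.card + (S \ Q).card = S.card := by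
      have := Finset.card_sdiff_add_card_eq_card hQS; omega
    have hc1 : (insert η Q).card = Q.card + 1 := Finset.card_insert_of_notMem hηQ
    have hc2 : ((S \ Q) ∪ {η}).card = (S \ Q).card + 1 := by
      rw [union_singleton',
        Finset.card_insert_of_notMem fun h => hηS (Finset.mem_sdiff.1 h).1]
    simp only [wgt, h1, h2, h3, h4, hST, hc1, hc2, hcard]
    rw [← hab]
    have ha' : (1 : ℝ) ≤ (Q.card : ℝ) := by exact_mod_cast ha1
    have hb' : (1 : ℝ) ≤ ((S \ Q).card : ℝ) := by exact_mod_cast hb1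
    have n1 : ((Q.card : ℝ) + (S \ Q).card) ≠ 0 := by linarith
    have n2 : ((Q.card : ℝ) + (S \ Q).card + 1) ≠ 0 := by linarith
    have n3 : ((Q.card : ℝ) + (S \ Q).card - 1) ≠ 0 := by linarith
    have n4 : (((Q.card + (S \ Q).card).factorial : ℝ)) ≠ 0 :=
      Nat.cast_ne_zero.2 (Nat.factorial_ne_zero _)
    have n5 : ((Q.card.factorial : ℝ)) ≠ 0 := Nat.cast_ne_zero.2 (Nat.factorial_ne_zero _)
    have n6 : (((S \ Q).card.factorial : ℝ)) ≠ 0 := Nat.cast_ne_zero.2 (Nat.factorial_ne_zero _)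
    rw [Nat.factorial_succ (Q.card + (S \ Q).card), Nat.factorial_succ Q.card,
      Nat.factorial_succ (S \ Q).card]
    push_cast
    rw [add_sub_cancel_right]
    field_simp
    ring
  -- split the sum over partitions of S ∪ {η} by membership of η
  rw [innerP, ← Finset.sum_filter_add_sum_filter_not
    ((S ∪ {η}).powerset.filter fun Q => Q ≠ ∅ ∧ Q ≠ S ∪ {η}) (fun Q => η ∈ Q)]
  have himg : (((S ∪ {η}).powerset.filter fun Q => Q ≠ ∅ ∧ Q ≠ S ∪ {η}).filter
        fun Q => η ∈ Q)
      = (S.powerset.filter fun Q => Q ≠ S).image (insert η) := by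
    ext Q
    simp only [Finset.mem_filter, Finset.mem_powerset, Finset.mem_image]
    constructor
    · rintro ⟨⟨hQ, h0, hQS'⟩, hηQ⟩
      refine ⟨Q.erase η, ⟨?_, ?_⟩, Finset.insert_erase hηQ⟩
      · intro a ha
        have h1 := Finset.mem_erase.1 ha
        rcases Finset.mem_union.1 (hQ h1.2) with h | h
        · exact h
        · exact absurd (Finset.mem_singleton.1 h) h1.1
      · intro h
        apply hQS'
        rw [← Finset.insert_erase hηQ, h, ← union_singleton']
    · rintro ⟨Q₀, ⟨hQ₀, hQ₀S⟩, rfl⟩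
      have hηQ₀ : η ∉ Q₀ := fun h => hηS (hQ₀ h)
      refine ⟨⟨?_, Finset.insert_ne_empty _ _, ?_⟩, Finset.mem_insert_self _ _⟩
      · rw [union_singleton']
        exact Finset.insert_subset_insert _ hQ₀
      · intro h
        apply hQ₀S
        rw [union_singleton'] at h
        have h2 := congrArg (fun X : Finset α => X.erase η) h
        simpa [Finset.erase_insert hηQ₀, Finset.erase_insert hηS] using h2
  have hinj : ∀ x ∈ S.powerset.filter fun Q => Q ≠ S,
      ∀ y ∈ S.powerset.filter fun Q => Q ≠ S, insert η x = insert η y → x = y := by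
    intro x hx y hy hxy
    simp only [Finset.mem_filter, Finset.mem_powerset] at hx hy
    rw [← Finset.erase_insert (fun h => hηS (hx.1 h) : η ∉ x), hxy,
      Finset.erase_insert (fun h => hηS (hy.1 h) : η ∉ y)]
  have hsetA : (((S ∪ {η}).powerset.filter fun Q => Q ≠ ∅ ∧ Q ≠ S ∪ {η}).filter
        fun Q => ¬η ∈ Q)
      = S.powerset.filter fun Q => Q ≠ ∅ := by
    ext Q
    simp only [Finset.mem_filter, Finset.mem_powerset]
    constructor
    · rintro ⟨⟨hQ, h0, -⟩, hηQ⟩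
      refine ⟨fun a ha => ?_, h0⟩
      rcases Finset.mem_union.1 (hQ ha) with h | h
      · exact h
      · cases Finset.mem_singleton.1 h
        exact absurd ha hηQ
    · rintro ⟨hQ, h0⟩
      have hηQ : η ∉ Q := fun h => hηS (hQ h)
      refine ⟨⟨hQ.trans Finset.subset_union_left, h0, fun h => hηQ ?_⟩, hηQ⟩
      rw [h]
      exact Finset.mem_union_right _ (Finset.mem_singleton_self η)
  rw [himg, Finset.sum_image hinj, hsetA]
  have hsplit2 : ∀ f : Finset α → ℝ, f ∅ = 0 →
      ∑ Q ∈ S.powerset.filter (fun Q => Q ≠ S), f Q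
      = ∑ Q ∈ S.powerset.filter (fun Q => Q ≠ ∅ ∧ Q ≠ S), f Q := by
    intro f hf0
    rw [← Finset.sum_filter_add_sum_filter_not (S.powerset.filter fun Q => Q ≠ S)
      (fun Q => Q ≠ ∅) f]
    have e1 : ((S.powerset.filter fun Q => Q ≠ S).filter fun Q => Q ≠ ∅)
        = S.powerset.filter fun Q => Q ≠ ∅ ∧ Q ≠ S := by
      rw [Finset.filter_filter]
      exact Finset.filter_congr fun Q _ => and_comm
    have e2 : ((S.powerset.filter fun Q => Q ≠ S).filter fun Q => ¬Q ≠ ∅) = {∅} := by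
      ext Q
      simp only [Finset.mem_filter, Finset.mem_powerset, not_not, Finset.mem_singleton]
      constructor
      · rintro ⟨-, h⟩; exact h
      · rintro rfl
        exact ⟨⟨Finset.empty_subset S, fun h => hSne h.symm⟩, rfl⟩
    rw [e1, e2, Finset.sum_singleton, hf0, add_zero]
  have hsplit1 : ∀ f : Finset α → ℝ, f S = 0 →
      ∑ Q ∈ S.powerset.filter (fun Q => Q ≠ ∅), f Q
      = ∑ Q ∈ S.powerset.filter (fun Q => Q ≠ ∅ ∧ Q ≠ S), f Q := by
    intro f hfS
    rw [← Finset.sum_filter_add_sum_filter_not (S.powerset.filter fun Q => Q ≠ ∅)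
      (fun Q => Q ≠ S) f]
    have e1 : ((S.powerset.filter fun Q => Q ≠ ∅).filter fun Q => Q ≠ S)
        = S.powerset.filter fun Q => Q ≠ ∅ ∧ Q ≠ S := Finset.filter_filter _ _ _
    have e2 : ((S.powerset.filter fun Q => Q ≠ ∅).filter fun Q => ¬Q ≠ S) = {S} := by
      ext Q
      simp only [Finset.mem_filter, Finset.mem_powerset, not_not, Finset.mem_singleton]
      constructor
      · rintro ⟨-, h⟩; exact h
      · rintro rfl
        exact ⟨⟨Finset.Subset.refl _, hSne⟩, rfl⟩
    rw [e1, e2, Finset.sum_singleton, hfS, add_zero]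
  have hz2 : wgt (S ∪ {η}) (insert η ∅) *
      (v (S ∪ {η} ∪ T) - v (insert η ∅ ∪ T) - v ((S ∪ {η}) \ insert η ∅ ∪ T) + v T) = 0 := by
    have hd : (S ∪ {η}) \ insert η ∅ = S := by
      ext a
      simp only [Finset.mem_sdiff, Finset.mem_union, Finset.mem_insert, Finset.mem_singleton,
        Finset.notMem_empty, or_false]
      constructor
      · rintro ⟨h | h, hn⟩
        · exact h
        · exact absurd h hn
      · intro ha
        exact ⟨Or.inl ha, fun h => hηS (h ▸ ha)⟩
    have he : insert η (∅ : Finset α) ∪ T = {η} ∪ T := by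
      congr 1
    rw [hd, he, hTη, hST]
    ring
  have hz1 : wgt (S ∪ {η}) S *
      (v (S ∪ {η} ∪ T) - v (S ∪ T) - v ((S ∪ {η}) \ S ∪ T) + v T) = 0 := by
    have hd : (S ∪ {η}) \ S = {η} := by
      ext a
      simp only [Finset.mem_sdiff, Finset.mem_union, Finset.mem_singleton]
      constructor
      · rintro ⟨h | h, hn⟩
        · exact absurd h hn
        · exact h
      · rintro rfl
        exact ⟨Or.inr rfl, hηS⟩
    rw [hd, hTη, hST]
    ring
  rw [hsplit2 (fun Q => wgt (S ∪ {η}) (insert η Q) *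
      (v (S ∪ {η} ∪ T) - v (insert η Q ∪ T) - v ((S ∪ {η}) \ insert η Q ∪ T) + v T)) hz2,
    hsplit1 (fun Q => wgt (S ∪ {η}) Q *
      (v (S ∪ {η} ∪ T) - v (Q ∪ T) - v ((S ∪ {η}) \ Q ∪ T) + v T)) hz1,
    ← Finset.sum_add_distrib, innerP, Finset.mul_sum]
  exact Finset.sum_congr rfl hpoint
lemma C_SO_dilute (N : Finset α) (v : Finset α → ℝ) (η : α) (hη : η ∈ N)
    (hnu : ∀ U ⊆ N \ {η}, v (U ∪ {η}) = v U)
    (S : Finset α) (hS : S ⊆ N \ {η}) (hs : 2 ≤ S.card) :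
    C_SO N v (S ∪ {η}) =
      (1 - 2 / ((S.card : ℝ) * ((S.card : ℝ) + 1))) * C_SO N v S := by
  have hηS : η ∉ S := fun h => (Finset.mem_sdiff.1 (hS h)).2 (Finset.mem_singleton_self η)
  have hsub : N \ S = insert η (N \ (S ∪ {η})) := by
    ext a
    simp only [Finset.mem_sdiff, Finset.mem_insert, Finset.mem_union, Finset.mem_singleton]
    constructor
    · rintro ⟨haN, haS⟩
      by_cases h : a = η
      · exact Or.inl h
      · exact Or.inr ⟨haN, fun hc => hc.elim haS h⟩
    · rintro (rfl | ⟨haN, haS⟩)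
      · exact ⟨hη, hηS⟩
      · exact ⟨haN, fun h => haS (Or.inl h)⟩
  have hηnot : η ∉ N \ (S ∪ {η}) := fun h =>
    (Finset.mem_sdiff.1 h).2 (Finset.mem_union_right _ (Finset.mem_singleton_self η))
  rw [C_SO, C_SO]
  simp only [inner_eq]
  rw [hsub, Finset.sum_powerset_insert hηnot, mul_add, Finset.mul_sum, Finset.mul_sum,
    ← Finset.sum_add_distrib]
  refine Finset.sum_congr rfl fun T hT => ?_
  rw [Finset.mem_powerset] at hT
  rw [innerP_insert N v η hnu S hS T hT, key_inner N v η hnu S hS hs T hT,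
    ← soExt_key N S T η hη hS hT]
  ring


/-- adding a null player `η` to `S` dilutes the Shapley-Owen coopetition
index: `|C_SO(S ∪ {η})| ≤ (1 − 2/(s(s+1)))·|C_SO(S)|`. -/
theorem statement9 (N : Finset α) (v : Finset α → ℝ) (hv : SimpleGame N v)
    (η : α) (hη : η ∈ N) (hnull : ∀ T ⊆ N \ {η}, v (T ∪ {η}) - v T = 0)
    (S : Finset α) (hS : S ⊆ N \ {η}) (hs : 2 ≤ S.card) :
    |C_SO N v (S ∪ {η})| ≤
      (1 - 2 / ((S.card : ℝ) * ((S.card : ℝ) + 1))) * |C_SO N v S| := by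
  have hnu : ∀ U ⊆ N \ {η}, v (U ∪ {η}) = v U := fun U hU => by
    have := hnull U hU; linarith
  have hr0 : 0 ≤ 1 - 2 / ((S.card : ℝ) * ((S.card : ℝ) + 1)) := by
    have h2 : (2 : ℝ) ≤ (S.card : ℝ) := by exact_mod_cast hs
    have h6 : (6 : ℝ) ≤ (S.card : ℝ) * ((S.card : ℝ) + 1) := by nlinarith
    have hpos : (0 : ℝ) < (S.card : ℝ) * ((S.card : ℝ) + 1) := by linarith
    rw [sub_nonneg, div_le_one hpos]
    linarith
  rw [C_SO_dilute N v η hη hnu S hS hs, abs_mul, abs_of_nonneg hr0]
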